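/- Let f ∈ ℂ[z₁,…,zₙ] be a multi-affine polynomial with the half-plane property, and let F = {S ⊆ {1,…,n} : the coefficient of ∏_{i∈S} zᵢ in f is nonzero}. Then F satisfies the symmetric exchange axiom: for all A, B ∈ F and every x ∈ A Δ B there exists y ∈ A Δ B such that A Δ {x,y} ∈ F (so F is a delta-matroid on its ground set). -/

import Mathlib

open Finset Complex Real Filter

/-- If α + uβ ≠ 0 for all u in the open right half-plane, then Re(α conj β) ≥ 0. -/
lemma lin_root (α β : ℂ) (h : ∀ u : ℂ, 0 < u.re → α + u * β ≠ 0) :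
    0 ≤ (α * (starRingEnd ℂ) β).re := by
  by_contra hneg
  push_neg at hneg
  have hβ : β ≠ 0 := by
    rintro rfl
    simp at hneg
  have hns : 0 < Complex.normSq β := Complex.normSq_pos.2 hβ
  set u : ℂ := -(α * (starRingEnd ℂ) β) / (Complex.normSq β : ℝ) with hu
  have hure : 0 < u.re := by
    rw [hu, Complex.div_ofReal_re]
    have h1 : (-(α * (starRingEnd ℂ) β)).re = -((α * (starRingEnd ℂ) β).re) := by simp
    rw [h1]
    have : 0 < -(α * (starRingEnd ℂ) β).re := by linarith
    positivity
  refine h u hure ?_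
  rw [hu]
  have hβn : (Complex.normSq β : ℂ) ≠ 0 := by
    simp only [ne_eq, Complex.ofReal_eq_zero]
    exact ne_of_gt hns
  field_simp
  rw [mul_comm ((starRingEnd ℂ) β) β, Complex.mul_conj]
  ring

lemma re_mul_exp (c : ℂ) (x : ℝ) :
    (c * Complex.exp ((x:ℝ) * Complex.I)).re = ‖c‖ * Real.cos (c.arg + x) := by
  conv_lhs => rw [← Complex.norm_mul_exp_arg_mul_I c]
  rw [mul_assoc, ← Complex.exp_add, ← add_mul, ← Complex.ofReal_add,
    Complex.re_ofReal_mul, Complex.exp_ofReal_mul_I_re]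

/-- For any c ≠ 0 and m ≥ 2, there is an angle θ with |θ| ≤ π/3 such that
    c·e^{imθ} has real part at most -|c|/2. -/
lemma exists_theta (c : ℂ) (hc : c ≠ 0) (m : ℕ) (hm : 2 ≤ m) :
    ∃ θ : ℝ, |θ| ≤ Real.pi / 3 ∧
      (c * Complex.exp ((((m : ℝ) * θ : ℝ)) * Complex.I)).re ≤ -(‖c‖) / 2 := by
  have hπ : (0:ℝ) < Real.pi := Real.pi_pos
  have habs : 0 < ‖c‖ := norm_pos_iff.mpr hc
  set ψ := c.arg with hψdef
  have hψ₁ : -Real.pi < ψ := Complex.neg_pi_lt_arg c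
  have hψ₂ : ψ ≤ Real.pi := Complex.arg_le_pi c
  have hm' : (0:ℝ) < m := by positivity
  have hm2 : (2:ℝ) ≤ m := by exact_mod_cast hm
  by_cases hψ0 : 0 ≤ ψ
  · have hq0 : 0 ≤ (Real.pi - ψ) / m := div_nonneg (by linarith) (le_of_lt hm')
    have hq1 : (Real.pi - ψ) / m ≤ Real.pi / 2 := by gcongr <;> linarith
    refine ⟨2 * ((Real.pi - ψ) / m) / 3, ?_, ?_⟩
    · rw [_root_.abs_of_nonneg (show (0:ℝ) ≤ 2 * ((Real.pi - ψ) / m) / 3 by linarith)]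
      linarith
    · rw [re_mul_exp, ← hψdef]
      have key : ψ + (m : ℝ) * (2 * ((Real.pi - ψ) / m) / 3) = Real.pi - (Real.pi - ψ)/3 := by
        field_simp
        ring
      rw [key, Real.cos_pi_sub]
      have hb : (Real.pi - ψ)/3 ≤ Real.pi / 3 := by linarith
      have hb0 : 0 ≤ (Real.pi - ψ)/3 := by linarith
      have hcos : Real.cos (Real.pi/3) ≤ Real.cos ((Real.pi - ψ)/3) :=
        Real.cos_le_cos_of_nonneg_of_le_pi hb0 (by linarith) hb
      rw [Real.cos_pi_div_three] at hcos
      nlinarith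
  · push_neg at hψ0
    have hq0 : (-Real.pi - ψ) / m ≤ 0 :=
      div_nonpos_of_nonpos_of_nonneg (by linarith) (le_of_lt hm')
    have hq1 : (Real.pi + ψ) / m ≤ Real.pi / 2 := by gcongr <;> linarith
    have hq2 : 0 ≤ (Real.pi + ψ) / m := div_nonneg (by linarith) (le_of_lt hm')
    have hkey0 : (-Real.pi - ψ) / m = -((Real.pi + ψ) / m) := by ring
    refine ⟨2 * ((-Real.pi - ψ) / m) / 3, ?_, ?_⟩
    · rw [_root_.abs_of_nonpos (show 2 * ((-Real.pi - ψ) / m) / 3 ≤ 0 by linarith)]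
      rw [hkey0]
      linarith
    · rw [re_mul_exp, ← hψdef]
      have key : ψ + (m : ℝ) * (2 * ((-Real.pi - ψ) / m) / 3) = -(Real.pi - (Real.pi + ψ)/3) := by
        field_simp
        ring
      rw [key, Real.cos_neg, Real.cos_pi_sub]
      have hb : (Real.pi + ψ)/3 ≤ Real.pi / 3 := by linarith
      have hb0 : 0 ≤ (Real.pi + ψ)/3 := by linarith
      have hcos : Real.cos (Real.pi/3) ≤ Real.cos ((Real.pi + ψ)/3) :=
        Real.cos_le_cos_of_nonneg_of_le_pi hb0 (by linarith) hb
      rw [Real.cos_pi_div_three] at hcos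
      nlinarith
/-- Univariate core lemma: if h(ζ)·conj(k(ζ)) has nonnegative real part on a sector
around the positive real axis, k(0) ≠ 0 and h vanishes to order ≥ 2 at 0, then h ≡ 0. -/
lemma lemU (N : ℕ) (γ δ : ℕ → ℂ) (hδ : δ 0 ≠ 0) (hγ0 : γ 0 = 0) (hγ1 : γ 1 = 0)
    (hγtop : ∀ m, N ≤ m → γ m = 0)
    (H : ∀ ζ : ℂ, ζ ≠ 0 → |Complex.arg ζ| ≤ Real.pi/3 →
      0 ≤ ((∑ i ∈ Finset.range N, γ i * ζ^i) *
        (starRingEnd ℂ) (∑ i ∈ Finset.range N, δ i * ζ^i)).re) :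
    ∀ m, γ m = 0 := by
  intro m
  induction m using Nat.strong_induction_on with
  | _ m IH =>
  match m, IH with
  | 0, _ => exact hγ0
  | 1, _ => exact hγ1
  | (m+2), IH =>
  set m' := m + 2 with hm'def
  by_cases hmN : N ≤ m'
  · exact hγtop _ hmN
  push_neg at hmN
  by_contra hγm
  have hm2 : 2 ≤ m' := by omega
  set c : ℂ := γ m' * (starRingEnd ℂ) (δ 0) with hcdef
  have hc : c ≠ 0 := mul_ne_zero hγm (by simpa using hδ)
  obtain ⟨θ, hθ, hre⟩ := exists_theta c hc m' hm2
  have hπ : (0:ℝ) < Real.pi := Real.pi_pos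
  have hθ' : -Real.pi < θ ∧ θ ≤ Real.pi := by
    rw [abs_le] at hθ
    constructor <;> nlinarith [hθ.1, hθ.2]
  set ω : ℂ := Complex.exp ((θ:ℝ) * Complex.I) with hωdef
  have hωne : ω ≠ 0 := Complex.exp_ne_zero _
  have hωarg : ω.arg = θ := by
    rw [hωdef, Complex.exp_mul_I, Complex.arg_cos_add_sin_mul_I ⟨hθ'.1, hθ'.2⟩]
  set ζ : ℕ → ℂ := fun j => ((1/(j+1) : ℝ) : ℂ) * ω with hζdef
  have hjpos : ∀ j : ℕ, (0:ℝ) < 1/(j+1) := by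
    intro j; positivity
  have hζne : ∀ j, ζ j ≠ 0 := by
    intro j
    exact mul_ne_zero (by exact_mod_cast (hjpos j).ne') hωne
  have hζarg : ∀ j, (ζ j).arg = θ := by
    intro j
    rw [hζdef]
    simp only []
    rw [Complex.arg_real_mul _ (hjpos j), hωarg]
  have hζ0 : Tendsto ζ atTop (nhds 0) := by
    have h1 : Tendsto (fun j : ℕ => ((1/(j+1) : ℝ) : ℂ)) atTop (nhds ((0:ℝ):ℂ)) :=
      (Complex.continuous_ofReal.tendsto 0).comp tendsto_one_div_add_atTop_nhds_zero_nat
    have h2 := h1.mul_const ω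
    rw [hζdef]
    simpa using h2
  set g : ℂ → ℂ := fun z => ∑ i ∈ Finset.range N, γ (m' + i) * z^i with hgdef
  set k : ℂ → ℂ := fun z => ∑ i ∈ Finset.range N, δ i * z^i with hkdef
  have hNpos : 0 < N := by omega
  have hg0 : g 0 = γ m' := by
    rw [hgdef]
    simp only []
    rw [Finset.sum_eq_single_of_mem 0 (Finset.mem_range.2 hNpos)]
    · simp
    · intro i _ hi
      simp [zero_pow hi]
  have hk0 : k 0 = δ 0 := by
    rw [hkdef]
    simp only []
    rw [Finset.sum_eq_single_of_mem 0 (Finset.mem_range.2 hNpos)]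
    · simp
    · intro i _ hi
      simp [zero_pow hi]
  have hgc : Continuous g := by
    apply continuous_finset_sum
    intro i _
    exact continuous_const.mul (continuous_pow i)
  have hkc : Continuous k := by
    apply continuous_finset_sum
    intro i _
    exact continuous_const.mul (continuous_pow i)
  -- factorization h z = z^m' * g z
  have hfact : ∀ z : ℂ, (∑ i ∈ Finset.range N, γ i * z^i) = z^m' * g z := by
    intro z
    have hsub : (∑ i ∈ Finset.range N, γ i * z^i)
        = ∑ i ∈ Finset.range (m' + N), γ i * z^i := by
      apply Finset.sum_subset (Finset.range_subset_range.2 (by omega))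
      intro i _ hi
      rw [Finset.mem_range, not_lt] at hi
      rw [hγtop i hi, zero_mul]
    rw [hsub, Finset.sum_range_add]
    have hfirst : (∑ i ∈ Finset.range m', γ i * z^i) = 0 := by
      apply Finset.sum_eq_zero
      intro i hi
      rw [Finset.mem_range] at hi
      rw [IH i hi, zero_mul]
    rw [hfirst, zero_add, hgdef]
    simp only []
    rw [Finset.mul_sum]
    apply Finset.sum_congr rfl
    intro i _
    rw [pow_add]
    ring
  -- the sequence w
  set E : ℂ := Complex.exp ((((m' : ℝ) * θ : ℝ)) * Complex.I) with hEdef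
  set w : ℕ → ℂ := fun j => E * g (ζ j) * (starRingEnd ℂ) (k (ζ j)) with hwdef
  have hwlim : Tendsto w atTop (nhds (E * γ m' * (starRingEnd ℂ) (δ 0))) := by
    rw [hwdef]
    have h1 : Tendsto (fun j => g (ζ j)) atTop (nhds (γ m')) := by
      rw [← hg0]
      exact (hgc.tendsto 0).comp hζ0
    have h2 : Tendsto (fun j => (starRingEnd ℂ) (k (ζ j))) atTop
        (nhds ((starRingEnd ℂ) (δ 0))) := by
      rw [← hk0]
      exact ((Complex.continuous_conj.comp hkc).tendsto 0).comp hζ0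
    exact ((tendsto_const_nhds.mul h1).mul h2)
  have hwre_nonneg : ∀ j, 0 ≤ (w j).re := by
    intro j
    have hH := H (ζ j) (hζne j) (by rw [hζarg j]; exact hθ)
    rw [hfact] at hH
    have hζpow : (ζ j)^m' = ((((1/(j+1) : ℝ))^m' : ℝ) : ℂ) * E := by
      rw [hζdef]
      simp only []
      rw [mul_pow, hωdef, hEdef, ← Complex.exp_nat_mul]
      push_cast
      ring_nf
    rw [hζpow] at hH
    have hrw : ((((1/(j+1) : ℝ))^m' : ℝ) : ℂ) * E * g (ζ j) * (starRingEnd ℂ) (k (ζ j))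
        = ((((1/(j+1) : ℝ))^m' : ℝ) : ℂ) * w j := by
      rw [hwdef]; ring
    rw [hrw, Complex.re_ofReal_mul] at hH
    have hp : (0:ℝ) < (1/(j+1) : ℝ)^m' := by positivity
    nlinarith [hH, hp, mul_pos hp hp]
  have hlim_re : Tendsto (fun j => (w j).re) atTop
      (nhds ((E * γ m' * (starRingEnd ℂ) (δ 0)).re)) :=
    (Complex.continuous_re.tendsto _).comp hwlim
  have hge : 0 ≤ (E * γ m' * (starRingEnd ℂ) (δ 0)).re :=
    ge_of_tendsto' hlim_re hwre_nonneg
  have heq : E * γ m' * (starRingEnd ℂ) (δ 0) = c * E := by rw [hcdef]; ring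
  rw [heq, hEdef] at hge
  have habsc : 0 < ‖c‖ := norm_pos_iff.mpr hc
  linarith [hre, hge]
lemma lemB (a b : ℕ) (p q : ℕ → ℕ → ℂ)
    (hq : q 0 0 ≠ 0) (hp : ∀ i j, i + j ≤ 1 → p i j = 0)
    (H : ∀ s t : ℂ, 0 < s.re → 0 < t.re →
      0 ≤ ((∑ ij ∈ Finset.range (a+1) ×ˢ Finset.range (b+1), p ij.1 ij.2 * s^ij.1 * t^ij.2) *
        (starRingEnd ℂ) (∑ ij ∈ Finset.range (a+1) ×ˢ Finset.range (b+1),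
          q ij.1 ij.2 * s^ij.1 * t^ij.2)).re) :
    p a b = 0 := by
  classical
  set grid := Finset.range (a+1) ×ˢ Finset.range (b+1) with hgrid
  have key : ∀ (r : ℕ → ℕ → ℂ) (ζ : ℂ),
      (∑ ij ∈ grid, r ij.1 ij.2 * ζ^ij.1 * ζ^ij.2)
      = ∑ m ∈ Finset.range (a+b+1),
          (∑ ij ∈ grid.filter (fun ij => ij.1 + ij.2 = m), r ij.1 ij.2) * ζ^m := by
    intro r ζ
    rw [← Finset.sum_fiberwise_of_maps_to (t := Finset.range (a+b+1))
      (g := fun ij : ℕ × ℕ => ij.1 + ij.2) ?_ (fun ij => r ij.1 ij.2 * ζ^ij.1 * ζ^ij.2)]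
    · apply Finset.sum_congr rfl
      intro m _
      rw [Finset.sum_mul]
      apply Finset.sum_congr rfl
      intro ij hij
      rw [Finset.mem_filter] at hij
      rw [← hij.2, pow_add]
      ring
    · intro ij hij
      rw [hgrid, Finset.mem_product, Finset.mem_range, Finset.mem_range] at hij
      rw [Finset.mem_range]
      have hlt : ij.1 + ij.2 < a + b + 1 := by omega
      exact hlt
  set γ : ℕ → ℂ := fun m => ∑ ij ∈ grid.filter (fun ij => ij.1 + ij.2 = m), p ij.1 ij.2
    with hγdef
  set δ : ℕ → ℂ := fun m => ∑ ij ∈ grid.filter (fun ij => ij.1 + ij.2 = m), q ij.1 ij.2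
    with hδdef
  have hfib0 : grid.filter (fun ij => ij.1 + ij.2 = 0) = {(0,0)} := by
    ext ij
    rw [Finset.mem_filter, hgrid, Finset.mem_product, Finset.mem_range, Finset.mem_range,
      Finset.mem_singleton, Prod.ext_iff]
    omega
  have hfibtop : grid.filter (fun ij => ij.1 + ij.2 = a + b) = {(a,b)} := by
    ext ij
    rw [Finset.mem_filter, hgrid, Finset.mem_product, Finset.mem_range, Finset.mem_range,
      Finset.mem_singleton, Prod.ext_iff]
    omega
  have hall : ∀ m, γ m = 0 := by
    apply lemU (a+b+1) γ δ
    · rw [hδdef]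
      simp only []
      rw [hfib0, Finset.sum_singleton]
      exact hq
    · rw [hγdef]
      simp only []
      rw [hfib0, Finset.sum_singleton]
      exact hp 0 0 (by omega)
    · rw [hγdef]
      simp only []
      apply Finset.sum_eq_zero
      intro ij hij
      rw [Finset.mem_filter] at hij
      exact hp ij.1 ij.2 (by omega)
    · intro m hm
      rw [hγdef]
      simp only []
      apply Finset.sum_eq_zero
      intro ij hij
      rw [Finset.mem_filter, hgrid, Finset.mem_product, Finset.mem_range, Finset.mem_range] at hij
      obtain ⟨⟨h1, h2⟩, h3⟩ := hij
      have h3' : ij.1 + ij.2 = m := h3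
      omega
    · intro ζ hζne hζarg
      have hζre : 0 < ζ.re := by
        have h1 : ζ.re = ‖ζ‖ * Real.cos ζ.arg := by
          conv_lhs => rw [← Complex.norm_mul_cos_add_sin_mul_I ζ]
          simp
        have habs : 0 < ‖ζ‖ := norm_pos_iff.mpr hζne
        have hcos : Real.cos (Real.pi/3) ≤ Real.cos |ζ.arg| :=
          Real.cos_le_cos_of_nonneg_of_le_pi (abs_nonneg _) (by linarith [Real.pi_pos]) hζarg
        rw [Real.cos_abs, Real.cos_pi_div_three] at hcos
        rw [h1]
        nlinarith
      have := H ζ ζ hζre hζre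
      rw [key p ζ, key q ζ] at this
      exact this
  have hγtop := hall (a + b)
  rw [hγdef] at hγtop
  simp only [] at hγtop
  rw [hfibtop, Finset.sum_singleton] at hγtop
  exact hγtop
lemma pow_mul_inv_pow (z : ℂ) (hz : z ≠ 0) {m l : ℕ} (h : m ≤ l) :
    z ^ l * (z⁻¹) ^ m = z ^ (l - m) := by
  have h1 : z ^ l = z ^ (l - m) * z ^ m := by rw [← pow_add, Nat.sub_add_cancel h]
  rw [h1, inv_pow, mul_assoc, mul_inv_cancel₀ (pow_ne_zero _ hz), mul_one]

section Core1
variable {n : ℕ}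

lemma core1 (c : Finset (Fin n) → ℂ)
    (hφ : ∀ z : Fin n → ℂ, (∀ i, 0 < (z i).re) →
      (∑ S : Finset (Fin n), c S * ∏ i ∈ S, z i) ≠ 0)
    (A B : Finset (Fin n)) (x : Fin n) (hxA : x ∈ A) (hxB : x ∉ B)
    (hA : c A ≠ 0) (hB : c B ≠ 0)
    (hz : ∀ y ∈ symmDiff A B, c (symmDiff A {x, y}) = 0) : False := by
  classical
  set K := A ∩ B with hK
  set E₁ := (A \ B).erase x with hE₁
  set E₂ := B \ A with hE₂
  set Rst := (A ∪ B)ᶜ with hRst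
  set a := E₁.card with ha
  set b := E₂.card with hb
  set k := K.card with hk
  -- basic membership facts
  have hKfacts : ∀ i ∈ K, i ∈ A ∧ i ∈ B ∧ i ≠ x := by
    intro i hi
    rw [hK, Finset.mem_inter] at hi
    exact ⟨hi.1, hi.2, by rintro rfl; exact hxB hi.2⟩
  have hE₁facts : ∀ i ∈ E₁, i ∈ A ∧ i ∉ B ∧ i ≠ x := by
    intro i hi
    rw [hE₁, Finset.mem_erase, Finset.mem_sdiff] at hi
    exact ⟨hi.2.1, hi.2.2, hi.1⟩
  have hE₂facts : ∀ i ∈ E₂, i ∉ A ∧ i ∈ B ∧ i ≠ x := by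
    intro i hi
    rw [hE₂, Finset.mem_sdiff] at hi
    exact ⟨hi.2, hi.1, by rintro rfl; exact hxB hi.1⟩
  have hRstfacts : ∀ i ∈ Rst, i ∉ A ∧ i ∉ B ∧ i ≠ x := by
    intro i hi
    rw [hRst, Finset.mem_compl, Finset.mem_union] at hi
    push_neg at hi
    exact ⟨hi.1, hi.2, by rintro rfl; exact hi.1 hxA⟩
  have hcover : ∀ i, i = x ∨ i ∈ K ∨ i ∈ E₁ ∨ i ∈ E₂ ∨ i ∈ Rst := by
    intro i
    by_cases h1 : i = x
    · exact Or.inl h1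
    by_cases h2 : i ∈ A
    · by_cases h3 : i ∈ B
      · exact Or.inr (Or.inl (by rw [hK, Finset.mem_inter]; exact ⟨h2, h3⟩))
      · refine Or.inr (Or.inr (Or.inl ?_))
        rw [hE₁, Finset.mem_erase, Finset.mem_sdiff]
        exact ⟨h1, h2, h3⟩
    · by_cases h3 : i ∈ B
      · exact Or.inr (Or.inr (Or.inr (Or.inl (by rw [hE₂, Finset.mem_sdiff]; exact ⟨h3, h2⟩))))
      · refine Or.inr (Or.inr (Or.inr (Or.inr ?_)))
        rw [hRst, Finset.mem_compl, Finset.mem_union]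
        push_neg
        exact ⟨h2, h3⟩
  have hxK : x ∉ K := fun h => (hKfacts x h).2.2 rfl
  have hxE₁ : x ∉ E₁ := fun h => (hE₁facts x h).2.2 rfl
  have hxE₂ : x ∉ E₂ := fun h => (hE₂facts x h).2.2 rfl
  have hxRst : x ∉ Rst := fun h => (hRstfacts x h).2.2 rfl
  have hKE₁ : ∀ i, i ∈ K → i ∉ E₁ := fun i hi hj => (hE₁facts i hj).2.1 (hKfacts i hi).2.1
  have hKE₂ : ∀ i, i ∈ K → i ∉ E₂ := fun i hi hj => (hE₂facts i hj).1 (hKfacts i hi).1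
  have hKRst : ∀ i, i ∈ K → i ∉ Rst := fun i hi hj => (hRstfacts i hj).1 (hKfacts i hi).1
  have hE₁E₂ : ∀ i, i ∈ E₁ → i ∉ E₂ := fun i hi hj => (hE₂facts i hj).1 (hE₁facts i hi).1
  have hE₁Rst : ∀ i, i ∈ E₁ → i ∉ Rst := fun i hi hj => (hRstfacts i hj).1 (hE₁facts i hi).1
  have hE₂Rst : ∀ i, i ∈ E₂ → i ∉ Rst := fun i hi hj => (hRstfacts i hj).2.1 (hE₂facts i hi).2.1
  have hKA : K ⊆ A := fun i hi => (hKfacts i hi).1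
  have hKB : K ⊆ B := fun i hi => (hKfacts i hi).2.1
  have hE₁A : E₁ ⊆ A := fun i hi => (hE₁facts i hi).1
  have hE₂B : E₂ ⊆ B := fun i hi => (hE₂facts i hi).2.1
  -- block function
  set blk : Fin n → Fin 5 := fun i =>
    if i = x then 0 else if i ∈ K then 1 else if i ∈ E₁ then 2 else if i ∈ E₂ then 3 else 4
    with hblk
  have hblkval : ∀ i, (i = x → blk i = 0) ∧ (i ∈ K → blk i = 1) ∧ (i ∈ E₁ → blk i = 2)
      ∧ (i ∈ E₂ → blk i = 3) ∧ (i ∈ Rst → blk i = 4) := by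
    intro i
    refine ⟨?_, ?_, ?_, ?_, ?_⟩
    · intro h
      show (if i = x then (0:Fin 5) else if i ∈ K then 1 else if i ∈ E₁ then 2
        else if i ∈ E₂ then 3 else 4) = 0
      rw [if_pos h]
    · intro h
      have h1 : i ≠ x := (hKfacts i h).2.2
      show (if i = x then (0:Fin 5) else if i ∈ K then 1 else if i ∈ E₁ then 2
        else if i ∈ E₂ then 3 else 4) = 1
      rw [if_neg h1, if_pos h]
    · intro h
      have h1 : i ≠ x := (hE₁facts i h).2.2
      show (if i = x then (0:Fin 5) else if i ∈ K then 1 else if i ∈ E₁ then 2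
        else if i ∈ E₂ then 3 else 4) = 2
      rw [if_neg h1, if_neg (fun hK' => hKE₁ i hK' h), if_pos h]
    · intro h
      have h1 : i ≠ x := (hE₂facts i h).2.2
      show (if i = x then (0:Fin 5) else if i ∈ K then 1 else if i ∈ E₁ then 2
        else if i ∈ E₂ then 3 else 4) = 3
      rw [if_neg h1, if_neg (fun hK' => hKE₂ i hK' h), if_neg (fun hE' => hE₁E₂ i hE' h),
        if_pos h]
    · intro h
      have h1 : i ≠ x := (hRstfacts i h).2.2
      show (if i = x then (0:Fin 5) else if i ∈ K then 1 else if i ∈ E₁ then 2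
        else if i ∈ E₂ then 3 else 4) = 4
      rw [if_neg h1, if_neg (fun hK' => hKRst i hK' h), if_neg (fun hE' => hE₁Rst i hE' h),
        if_neg (fun hE' => hE₂Rst i hE' h)]
  have hblk0 : ∀ i, blk i = 0 ↔ i = x := by
    intro i
    constructor
    · intro h
      rcases hcover i with h'|h'|h'|h'|h'
      · exact h'
      all_goals {
        first
        | (exfalso; have := (hblkval i).2.1 h'; rw [h] at this; exact absurd this (by decide))
        | (exfalso; have := (hblkval i).2.2.1 h'; rw [h] at this; exact absurd this (by decide))
        | (exfalso; have := (hblkval i).2.2.2.1 h'; rw [h] at this; exact absurd this (by decide))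
        | (exfalso; have := (hblkval i).2.2.2.2 h'; rw [h] at this; exact absurd this (by decide)) }
    · exact (hblkval i).1
  have hblk1 : ∀ i, blk i = 1 ↔ i ∈ K := by
    intro i
    constructor
    · intro h
      rcases hcover i with h'|h'|h'|h'|h'
      · exfalso; have := (hblkval i).1 h'; rw [h] at this; exact absurd this (by decide)
      · exact h'
      · exfalso; have := (hblkval i).2.2.1 h'; rw [h] at this; exact absurd this (by decide)
      · exfalso; have := (hblkval i).2.2.2.1 h'; rw [h] at this; exact absurd this (by decide)
      · exfalso; have := (hblkval i).2.2.2.2 h'; rw [h] at this; exact absurd this (by decide)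
    · exact (hblkval i).2.1
  have hblk2 : ∀ i, blk i = 2 ↔ i ∈ E₁ := by
    intro i
    constructor
    · intro h
      rcases hcover i with h'|h'|h'|h'|h'
      · exfalso; have := (hblkval i).1 h'; rw [h] at this; exact absurd this (by decide)
      · exfalso; have := (hblkval i).2.1 h'; rw [h] at this; exact absurd this (by decide)
      · exact h'
      · exfalso; have := (hblkval i).2.2.2.1 h'; rw [h] at this; exact absurd this (by decide)
      · exfalso; have := (hblkval i).2.2.2.2 h'; rw [h] at this; exact absurd this (by decide)
    · exact (hblkval i).2.2.1
  have hblk3 : ∀ i, blk i = 3 ↔ i ∈ E₂ := by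
    intro i
    constructor
    · intro h
      rcases hcover i with h'|h'|h'|h'|h'
      · exfalso; have := (hblkval i).1 h'; rw [h] at this; exact absurd this (by decide)
      · exfalso; have := (hblkval i).2.1 h'; rw [h] at this; exact absurd this (by decide)
      · exfalso; have := (hblkval i).2.2.1 h'; rw [h] at this; exact absurd this (by decide)
      · exact h'
      · exfalso; have := (hblkval i).2.2.2.2 h'; rw [h] at this; exact absurd this (by decide)
    · exact (hblkval i).2.2.2.1
  have hblk4 : ∀ i, blk i = 4 ↔ i ∈ Rst := by
    intro i
    constructor
    · intro h
      rcases hcover i with h'|h'|h'|h'|h'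
      · exfalso; have := (hblkval i).1 h'; rw [h] at this; exact absurd this (by decide)
      · exfalso; have := (hblkval i).2.1 h'; rw [h] at this; exact absurd this (by decide)
      · exfalso; have := (hblkval i).2.2.1 h'; rw [h] at this; exact absurd this (by decide)
      · exfalso; have := (hblkval i).2.2.2.1 h'; rw [h] at this; exact absurd this (by decide)
      · exact h'
    · exact (hblkval i).2.2.2.2
  -- product formula over blocks
  have prodform : ∀ (S : Finset (Fin n)) (w : Fin 5 → ℂ),
      ∏ i ∈ S, w (blk i) = w 0 ^ (S ∩ {x}).card * w 1 ^ (S ∩ K).card * w 2 ^ (S ∩ E₁).card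
        * w 3 ^ (S ∩ E₂).card * w 4 ^ (S ∩ Rst).card := by
    intro S w
    have h1 : ∏ i ∈ S, w (blk i)
        = ∏ j ∈ (Finset.univ : Finset (Fin 5)), ∏ i ∈ S.filter (fun i => blk i = j), w (blk i) :=
      (Finset.prod_fiberwise_of_maps_to (fun i _ => Finset.mem_univ (blk i)) _).symm
    rw [h1, Fin.prod_univ_five]
    have hinner : ∀ j : Fin 5, ∏ i ∈ S.filter (fun i => blk i = j), w (blk i)
        = w j ^ (S.filter (fun i => blk i = j)).card := by
      intro j
      rw [Finset.prod_congr rfl (fun i hi => ?_), Finset.prod_const]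
      rw [Finset.mem_filter] at hi
      rw [hi.2]
    have hf0 : S.filter (fun i => blk i = 0) = S ∩ {x} := by
      ext i
      rw [Finset.mem_filter, Finset.mem_inter, Finset.mem_singleton, hblk0]
    have hf1 : S.filter (fun i => blk i = 1) = S ∩ K := by
      ext i
      rw [Finset.mem_filter, Finset.mem_inter, hblk1]
    have hf2 : S.filter (fun i => blk i = 2) = S ∩ E₁ := by
      ext i
      rw [Finset.mem_filter, Finset.mem_inter, hblk2]
    have hf3 : S.filter (fun i => blk i = 3) = S ∩ E₂ := by
      ext i
      rw [Finset.mem_filter, Finset.mem_inter, hblk3]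
    have hf4 : S.filter (fun i => blk i = 4) = S ∩ Rst := by
      ext i
      rw [Finset.mem_filter, Finset.mem_inter, hblk4]
    rw [hinner 0, hinner 1, hinner 2, hinner 3, hinner 4, hf0, hf1, hf2, hf3, hf4]
  -- counters
  set n1 : Finset (Fin n) → ℕ := fun S => (S ∩ K).card with hn1
  set n2 : Finset (Fin n) → ℕ := fun S => (S ∩ E₁).card with hn2
  set n3 : Finset (Fin n) → ℕ := fun S => (S ∩ E₂).card with hn3
  set n4 : Finset (Fin n) → ℕ := fun S => (S ∩ Rst).card with hn4
  have hn1le : ∀ S, n1 S ≤ k := fun S => Finset.card_le_card Finset.inter_subset_right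
  have hn2le : ∀ S, n2 S ≤ a := fun S => Finset.card_le_card Finset.inter_subset_right
  have hn3le : ∀ S, n3 S ≤ b := fun S => Finset.card_le_card Finset.inter_subset_right
  -- index sets
  set Good : Finset (Fin n) → Prop := fun S => K ⊆ S ∧ S ∩ Rst = ∅ with hGood
  set Q1 : Finset (Finset (Fin n)) := Finset.univ.filter (fun S => x ∉ S) with hQ1
  set Q0 : Finset (Finset (Fin n)) := Finset.univ.filter (fun S => x ∈ S) with hQ0
  set G1 := Q1.filter Good with hG1
  set G0 := Q0.filter Good with hG0
  have hmemG1 : ∀ S, S ∈ G1 ↔ (x ∉ S ∧ Good S) := by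
    intro S
    rw [hG1, Finset.mem_filter, hQ1, Finset.mem_filter]
    simp only [Finset.mem_univ, true_and]
  have hmemG0 : ∀ S, S ∈ G0 ↔ (x ∈ S ∧ Good S) := by
    intro S
    rw [hG0, Finset.mem_filter, hQ0, Finset.mem_filter]
    simp only [Finset.mem_univ, true_and]
  set p : ℕ → ℕ → ℂ := fun i j => ∑ S ∈ G1.filter (fun S => (a - n2 S, n3 S) = (i, j)), c S
    with hpdef
  set q : ℕ → ℕ → ℂ := fun i j => ∑ S ∈ G0.filter (fun S => (a - n2 S, n3 S) = (i, j)), c S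
    with hqdef
  -- membership decomposition for good sets
  have hSmem : ∀ (S : Finset (Fin n)) (i : Fin n), Good S →
      (i ∈ S ↔ ((i = x ∧ x ∈ S) ∨ i ∈ K ∨ i ∈ S ∩ E₁ ∨ i ∈ S ∩ E₂)) := by
    intro S i hG
    constructor
    · intro hi
      rcases hcover i with h'|h'|h'|h'|h'
      · exact Or.inl ⟨h', h' ▸ hi⟩
      · exact Or.inr (Or.inl h')
      · exact Or.inr (Or.inr (Or.inl (Finset.mem_inter.2 ⟨hi, h'⟩)))
      · exact Or.inr (Or.inr (Or.inr (Finset.mem_inter.2 ⟨hi, h'⟩)))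
      · exfalso
        have h2 : i ∈ S ∩ Rst := Finset.mem_inter.2 ⟨hi, h'⟩
        rw [hG.2] at h2
        exact absurd h2 (Finset.notMem_empty i)
    · rintro (⟨rfl, h'⟩|h'|h'|h')
      exacts [h', hG.1 h', (Finset.mem_inter.1 h').1, (Finset.mem_inter.1 h').1]
  have hmemA : ∀ i, i ∈ A ↔ (i = x ∨ i ∈ K ∨ i ∈ E₁) := by
    intro i
    constructor
    · intro hi
      rcases hcover i with h'|h'|h'|h'|h'
      · exact Or.inl h'
      · exact Or.inr (Or.inl h')
      · exact Or.inr (Or.inr h')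
      · exact absurd hi (hE₂facts i h').1
      · exact absurd hi (hRstfacts i h').1
    · rintro (rfl|h'|h')
      exacts [hxA, hKA h', hE₁A h']
  have hmemB : ∀ i, i ∈ B ↔ (i ∈ K ∨ i ∈ E₂) := by
    intro i
    constructor
    · intro hi
      rcases hcover i with h'|h'|h'|h'|h'
      · exact absurd hi (h' ▸ hxB)
      · exact Or.inl h'
      · exact absurd hi (hE₁facts i h').2.1
      · exact Or.inr h'
      · exact absurd hi (hRstfacts i h').2.1
    · rintro (h'|h')
      exacts [hKB h', hE₂B h']
  -- intersections of A and B with blocks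
  have hARst : A ∩ Rst = ∅ := by
    apply Finset.eq_empty_iff_forall_notMem.2
    intro i hi
    rw [Finset.mem_inter] at hi
    exact (hRstfacts i hi.2).1 hi.1
  have hBRst : B ∩ Rst = ∅ := by
    apply Finset.eq_empty_iff_forall_notMem.2
    intro i hi
    rw [Finset.mem_inter] at hi
    exact (hRstfacts i hi.2).2.1 hi.1
  have hAE₁ : A ∩ E₁ = E₁ := Finset.inter_eq_right.2 hE₁A
  have hAE₂ : A ∩ E₂ = ∅ := by
    apply Finset.eq_empty_iff_forall_notMem.2
    intro i hi
    rw [Finset.mem_inter] at hi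
    exact (hE₂facts i hi.2).1 hi.1
  have hBE₁ : B ∩ E₁ = ∅ := by
    apply Finset.eq_empty_iff_forall_notMem.2
    intro i hi
    rw [Finset.mem_inter] at hi
    exact (hE₁facts i hi.2).2.1 hi.1
  have hBE₂ : B ∩ E₂ = E₂ := Finset.inter_eq_right.2 hE₂B
  have hGoodA : Good A := ⟨Finset.inter_subset_left, hARst⟩
  have hGoodB : Good B := ⟨fun i hi => hKB hi, hBRst⟩
  -- symmDiff computations
  have hsymm_x : symmDiff A ({x} : Finset (Fin n)) = A.erase x := by
    ext i
    rw [Finset.mem_symmDiff, Finset.mem_erase, Finset.mem_singleton]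
    constructor
    · rintro (⟨h1, h2⟩|⟨rfl, h2⟩)
      · exact ⟨h2, h1⟩
      · exact absurd hxA h2
    · rintro ⟨h1, h2⟩
      exact Or.inl ⟨h2, h1⟩
  have hzx : c (A.erase x) = 0 := by
    have h := hz x (by rw [Finset.mem_symmDiff]; exact Or.inl ⟨hxA, hxB⟩)
    rwa [show ({x, x} : Finset (Fin n)) = {x} from
      Finset.insert_eq_self.2 (Finset.mem_singleton_self x), hsymm_x] at h
  have hzy₁ : ∀ y ∈ E₁, c ((A.erase x).erase y) = 0 := by
    intro y hy
    obtain ⟨hyA, hyB, hyx⟩ := hE₁facts y hy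
    have hsy : symmDiff A ({x, y} : Finset (Fin n)) = (A.erase x).erase y := by
      ext i
      simp only [Finset.mem_symmDiff, Finset.mem_insert, Finset.mem_erase,
        Finset.mem_singleton]
      constructor
      · rintro (⟨h1, h2⟩|⟨(rfl|rfl), h2⟩)
        · push_neg at h2
          exact ⟨h2.2, h2.1, h1⟩
        · exact absurd hxA h2
        · exact absurd hyA h2
      · rintro ⟨h1, h2, h3⟩
        refine Or.inl ⟨h3, ?_⟩
        push_neg
        exact ⟨h2, h1⟩
    have h := hz y (by rw [Finset.mem_symmDiff]; exact Or.inl ⟨hyA, hyB⟩)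
    rwa [hsy] at h
  have hzy₂ : ∀ y ∈ E₂, c (insert y (A.erase x)) = 0 := by
    intro y hy
    obtain ⟨hyA, hyB, hyx⟩ := hE₂facts y hy
    have hsy : symmDiff A ({x, y} : Finset (Fin n)) = insert y (A.erase x) := by
      ext i
      simp only [Finset.mem_symmDiff, Finset.mem_insert, Finset.mem_erase,
        Finset.mem_singleton]
      constructor
      · rintro (⟨h1, h2⟩|⟨(rfl|rfl), h2⟩)
        · push_neg at h2
          exact Or.inr ⟨h2.1, h1⟩
        · exact absurd hxA h2
        · exact Or.inl rfl
      · rintro (rfl|⟨h1, h2⟩)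
        · exact Or.inr ⟨Or.inr rfl, hyA⟩
        · exact Or.inl ⟨h2, by push_neg; exact ⟨h1, fun h => hyA (h ▸ h2)⟩⟩
    have h := hz y (by rw [Finset.mem_symmDiff]; exact Or.inr ⟨hyB, hyA⟩)
    rwa [hsy] at h
  -- coefficient identities
  have hq00 : q 0 0 = c A := by
    have hfq : G0.filter (fun S => (a - n2 S, n3 S) = (0, 0)) = {A} := by
      ext S
      rw [Finset.mem_filter, Finset.mem_singleton, hmemG0 S]
      constructor
      · rintro ⟨⟨hxS, hGS⟩, hpair⟩
        rw [Prod.mk.injEq] at hpair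
        have hc2 : (S ∩ E₁).card = n2 S := rfl
        have hc3 : (S ∩ E₂).card = n3 S := rfl
        have hn2a : n2 S = a := by have := hn2le S; omega
        have hSE₁ : S ∩ E₁ = E₁ :=
          Finset.eq_of_subset_of_card_le Finset.inter_subset_right (by omega)
        have hSE₂ : S ∩ E₂ = ∅ := Finset.card_eq_zero.1 (by omega)
        ext i
        rw [hSmem S i hGS, hSE₁, hSE₂, hmemA i]
        constructor
        · rintro (⟨rfl, -⟩|h'|h'|h')
          · exact Or.inl rfl
          · exact Or.inr (Or.inl h')
          · exact Or.inr (Or.inr h')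
          · exact absurd h' (Finset.notMem_empty i)
        · rintro (rfl|h'|h')
          · exact Or.inl ⟨rfl, hxS⟩
          · exact Or.inr (Or.inl h')
          · exact Or.inr (Or.inr (Or.inl h'))
      · intro hSA
        rw [hSA]
        refine ⟨⟨hxA, hGoodA⟩, ?_⟩
        rw [Prod.mk.injEq]
        have hc2 : n2 A = (A ∩ E₁).card := rfl
        have hc3 : n3 A = (A ∩ E₂).card := rfl
        constructor
        · have h2 : n2 A = a := by rw [hc2, hAE₁, ha]
          omega
        · rw [hc3, hAE₂]
          rfl
    show (∑ S ∈ G0.filter (fun S => (a - n2 S, n3 S) = (0, 0)), c S) = c A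
    rw [hfq, Finset.sum_singleton]
  have hpab : p a b = c B := by
    have hfq : G1.filter (fun S => (a - n2 S, n3 S) = (a, b)) = {B} := by
      ext S
      rw [Finset.mem_filter, Finset.mem_singleton, hmemG1 S]
      constructor
      · rintro ⟨⟨hxS, hGS⟩, hpair⟩
        rw [Prod.mk.injEq] at hpair
        have hc2 : (S ∩ E₁).card = n2 S := rfl
        have hc3 : (S ∩ E₂).card = n3 S := rfl
        have hn20 : n2 S = 0 := by have := hn2le S; omega
        have hSE₁ : S ∩ E₁ = ∅ := Finset.card_eq_zero.1 (by omega)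
        have hSE₂ : S ∩ E₂ = E₂ :=
          Finset.eq_of_subset_of_card_le Finset.inter_subset_right (by omega)
        ext i
        rw [hSmem S i hGS, hSE₁, hSE₂, hmemB i]
        constructor
        · rintro (⟨rfl, h⟩|h'|h'|h')
          · exact absurd h hxS
          · exact Or.inl h'
          · exact absurd h' (Finset.notMem_empty i)
          · exact Or.inr h'
        · rintro (h'|h')
          · exact Or.inr (Or.inl h')
          · exact Or.inr (Or.inr (Or.inr h'))
      · intro hSB
        rw [hSB]
        refine ⟨⟨hxB, hGoodB⟩, ?_⟩
        rw [Prod.mk.injEq]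
        have hc2 : n2 B = (B ∩ E₁).card := rfl
        have hc3 : n3 B = (B ∩ E₂).card := rfl
        constructor
        · rw [hc2, hBE₁]
          simp
        · rw [hc3, hBE₂, hb]
    show (∑ S ∈ G1.filter (fun S => (a - n2 S, n3 S) = (a, b)), c S) = c B
    rw [hfq, Finset.sum_singleton]
  have hp00 : p 0 0 = 0 := by
    apply Finset.sum_eq_zero
    intro S hS
    rw [Finset.mem_filter, hmemG1 S] at hS
    obtain ⟨⟨hxS, hGS⟩, hpair⟩ := hS
    rw [Prod.mk.injEq] at hpair
    have hc2 : (S ∩ E₁).card = n2 S := rfl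
    have hc3 : (S ∩ E₂).card = n3 S := rfl
    have hn2a : n2 S = a := by have := hn2le S; omega
    have hSE₁ : S ∩ E₁ = E₁ :=
      Finset.eq_of_subset_of_card_le Finset.inter_subset_right (by omega)
    have hSE₂ : S ∩ E₂ = ∅ := Finset.card_eq_zero.1 (by omega)
    have hSA : S = A.erase x := by
      ext i
      rw [hSmem S i hGS, hSE₁, hSE₂, Finset.mem_erase (s := A), hmemA i]
      constructor
      · rintro (⟨rfl, h⟩|h'|h'|h')
        · exact absurd h hxS
        · exact ⟨(hKfacts i h').2.2, Or.inr (Or.inl h')⟩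
        · exact ⟨(hE₁facts i h').2.2, Or.inr (Or.inr h')⟩
        · exact absurd h' (Finset.notMem_empty i)
      · rintro ⟨h1, (rfl|h'|h')⟩
        · exact absurd rfl h1
        · exact Or.inr (Or.inl h')
        · exact Or.inr (Or.inr (Or.inl h'))
    rw [hSA]
    exact hzx
  have hp10 : p 1 0 = 0 := by
    apply Finset.sum_eq_zero
    intro S hS
    rw [Finset.mem_filter, hmemG1 S] at hS
    obtain ⟨⟨hxS, hGS⟩, hpair⟩ := hS
    rw [Prod.mk.injEq] at hpair
    have hc2 : (S ∩ E₁).card = n2 S := rfl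
    have hc3 : (S ∩ E₂).card = n3 S := rfl
    have hn2a : n2 S = a - 1 ∧ 1 ≤ a := by have := hn2le S; omega
    obtain ⟨y, hyE₁, hyS⟩ : ∃ y, y ∈ E₁ ∧ y ∉ S := by
      have hne : ¬ E₁ ⊆ S ∩ E₁ := by
        intro hsub
        have := Finset.card_le_card hsub
        omega
      rw [Finset.not_subset] at hne
      obtain ⟨y, hy1, hy2⟩ := hne
      exact ⟨y, hy1, fun hS' => hy2 (Finset.mem_inter.2 ⟨hS', hy1⟩)⟩
    have hSE₁ : S ∩ E₁ = E₁.erase y := by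
      apply Finset.eq_of_subset_of_card_le
      · intro i hi
        rw [Finset.mem_erase]
        exact ⟨fun h => hyS (h ▸ (Finset.mem_inter.1 hi).1), (Finset.mem_inter.1 hi).2⟩
      · rw [Finset.card_erase_of_mem hyE₁]
        omega
    have hSE₂ : S ∩ E₂ = ∅ := Finset.card_eq_zero.1 (by omega)
    have hSA : S = (A.erase x).erase y := by
      ext i
      rw [hSmem S i hGS, hSE₁, hSE₂, Finset.mem_erase (s := A.erase x),
        Finset.mem_erase (s := A), hmemA i]
      constructor
      · rintro (⟨rfl, h⟩|h'|h'|h')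
        · exact absurd h hxS
        · exact ⟨fun h => hKE₁ i h' (h ▸ hyE₁), (hKfacts i h').2.2, Or.inr (Or.inl h')⟩
        · rw [Finset.mem_erase] at h'
          exact ⟨h'.1, (hE₁facts i h'.2).2.2, Or.inr (Or.inr h'.2)⟩
        · exact absurd h' (Finset.notMem_empty i)
      · rintro ⟨h1, h2, (rfl|h'|h')⟩
        · exact absurd rfl h2
        · exact Or.inr (Or.inl h')
        · exact Or.inr (Or.inr (Or.inl (Finset.mem_erase.2 ⟨h1, h'⟩)))
    rw [hSA]
    exact hzy₁ y hyE₁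
  have hp01 : p 0 1 = 0 := by
    apply Finset.sum_eq_zero
    intro S hS
    rw [Finset.mem_filter, hmemG1 S] at hS
    obtain ⟨⟨hxS, hGS⟩, hpair⟩ := hS
    rw [Prod.mk.injEq] at hpair
    have hc2 : (S ∩ E₁).card = n2 S := rfl
    have hc3 : (S ∩ E₂).card = n3 S := rfl
    have hn2a : n2 S = a := by have := hn2le S; omega
    have hSE₁ : S ∩ E₁ = E₁ :=
      Finset.eq_of_subset_of_card_le Finset.inter_subset_right (by omega)
    obtain ⟨y, hy⟩ : ∃ y, S ∩ E₂ = {y} := Finset.card_eq_one.1 (by omega)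
    have hyE₂ : y ∈ E₂ := by
      have : y ∈ S ∩ E₂ := hy ▸ Finset.mem_singleton_self y
      exact (Finset.mem_inter.1 this).2
    have hSA : S = insert y (A.erase x) := by
      ext i
      rw [hSmem S i hGS, hSE₁, hy, Finset.mem_insert, Finset.mem_erase (s := A),
        Finset.mem_singleton, hmemA i]
      constructor
      · rintro (⟨rfl, h⟩|h'|h'|rfl)
        · exact absurd h hxS
        · exact Or.inr ⟨(hKfacts i h').2.2, Or.inr (Or.inl h')⟩
        · exact Or.inr ⟨(hE₁facts i h').2.2, Or.inr (Or.inr h')⟩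
        · exact Or.inl rfl
      · rintro (rfl|⟨h1, (rfl|h'|h')⟩)
        · exact Or.inr (Or.inr (Or.inr rfl))
        · exact absurd rfl h1
        · exact Or.inr (Or.inl h')
        · exact Or.inr (Or.inr (Or.inl h'))
    rw [hSA]
    exact hzy₂ y hyE₂
  -- grid sum identity
  have hgridsum : ∀ (G : Finset (Finset (Fin n))) (r : ℕ → ℕ → ℂ) (s t : ℂ),
      (∀ i j, r i j = ∑ S ∈ G.filter (fun S => (a - n2 S, n3 S) = (i, j)), c S) →
      (∑ ij ∈ Finset.range (a+1) ×ˢ Finset.range (b+1), r ij.1 ij.2 * s^ij.1 * t^ij.2)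
        = ∑ S ∈ G, c S * s ^ (a - n2 S) * t ^ (n3 S) := by
    intro G r s t hr
    rw [← Finset.sum_fiberwise_of_maps_to (t := Finset.range (a+1) ×ˢ Finset.range (b+1))
      (g := fun S => (a - n2 S, n3 S)) ?_ (fun S => c S * s ^ (a - n2 S) * t ^ (n3 S))]
    · apply Finset.sum_congr rfl
      intro ij _
      rw [hr ij.1 ij.2, Finset.sum_mul, Finset.sum_mul]
      apply Finset.sum_congr rfl
      · intro S hS
        rw [Finset.mem_filter] at hS
        have hS2 : (a - n2 S, n3 S) = (ij.1, ij.2) := hS.2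
        rw [Prod.mk.injEq] at hS2
        rw [← hS2.1, ← hS2.2]
    · intro S _
      rw [Finset.mem_product, Finset.mem_range, Finset.mem_range]
      show (a - n2 S) < a + 1 ∧ (n3 S) < b + 1
      exact ⟨by have := hn2le S; omega, by have := hn3le S; omega⟩
  -- the main inequality
  have hmain : ∀ s t : ℂ, 0 < s.re → 0 < t.re →
      0 ≤ ((∑ ij ∈ Finset.range (a+1) ×ˢ Finset.range (b+1), p ij.1 ij.2 * s^ij.1 * t^ij.2) *
        (starRingEnd ℂ) (∑ ij ∈ Finset.range (a+1) ×ˢ Finset.range (b+1),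
          q ij.1 ij.2 * s^ij.1 * t^ij.2)).re := by
    intro s t hs ht
    have hsne : s ≠ 0 := fun h => by rw [h] at hs; simp at hs
    set α : ℕ → ℂ := fun m => ∑ S ∈ Q1, c S * s ^ (a - n2 S) * t ^ (n3 S) *
      ((((m+1 : ℕ) : ℂ))⁻¹) ^ ((k - n1 S) + n4 S) with hα
    set β : ℕ → ℂ := fun m => ∑ S ∈ Q0, c S * s ^ (a - n2 S) * t ^ (n3 S) *
      ((((m+1 : ℕ) : ℂ))⁻¹) ^ ((k - n1 S) + n4 S) with hβ
    have hnz : ∀ m : ℕ, ∀ u : ℂ, 0 < u.re → α m + u * β m ≠ 0 := by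
      intro m u hu
      set M : ℂ := ((m+1 : ℕ) : ℂ) with hM
      have hMre : (0:ℝ) < M.re := by
        rw [hM, Complex.natCast_re]
        positivity
      have hMne : M ≠ 0 := by
        rw [hM]
        exact Nat.cast_ne_zero.mpr (Nat.succ_ne_zero m)
      set w5 : Fin 5 → ℂ := ![u, M, s⁻¹, t, M⁻¹] with hw5
      set z : Fin n → ℂ := fun i => w5 (blk i) with hzdef
      have hzre : ∀ i, 0 < (z i).re := by
        intro i
        have hj : ∀ j : Fin 5, 0 < (w5 j).re := by
          intro j
          fin_cases j
          · exact hu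
          · exact hMre
          · show 0 < (s⁻¹).re
            rw [Complex.inv_re]
            exact div_pos hs (Complex.normSq_pos.2 hsne)
          · exact ht
          · show 0 < (M⁻¹).re
            rw [hM, show (((m+1:ℕ):ℂ))⁻¹ = (((((m+1:ℕ):ℝ))⁻¹ : ℝ) : ℂ) from by push_cast; simp,
              Complex.ofReal_re]
            positivity
        exact hj (blk i)
      have h0 := hφ z hzre
      have hxin : ∀ S : Finset (Fin n), x ∈ S → (S ∩ {x}).card = 1 := by
        intro S hS
        rw [show S ∩ {x} = {x} from Finset.inter_eq_right.2 (Finset.singleton_subset_iff.2 hS)]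
        rfl
      have hxout : ∀ S : Finset (Fin n), x ∉ S → (S ∩ {x}).card = 0 := by
        intro S hS
        rw [Finset.card_eq_zero]
        apply Finset.eq_empty_iff_forall_notMem.2
        intro i hi
        rw [Finset.mem_inter, Finset.mem_singleton] at hi
        exact hS (hi.2 ▸ hi.1)
      have hident : (∑ S : Finset (Fin n), c S * ∏ i ∈ S, z i) * (s ^ a * (M⁻¹) ^ k)
          = α m + u * β m := by
        rw [Finset.sum_mul]
        have hterm : ∀ S : Finset (Fin n),
            (c S * ∏ i ∈ S, z i) * (s ^ a * (M⁻¹) ^ k)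
            = c S * u ^ (S ∩ {x}).card * s ^ (a - n2 S) * t ^ (n3 S)
              * (M⁻¹) ^ ((k - n1 S) + n4 S) := by
          intro S
          have hzz : ∏ i ∈ S, z i = ∏ i ∈ S, w5 (blk i) := rfl
          rw [hzz, prodform S w5]
          have e0 : w5 0 = u := rfl
          have e1 : w5 1 = M := rfl
          have e2 : w5 2 = s⁻¹ := rfl
          have e3 : w5 3 = t := rfl
          have e4 : w5 4 = M⁻¹ := rfl
          rw [e0, e1, e2, e3, e4]
          have hc1 : (S ∩ K).card = n1 S := rfl
          have hc2 : (S ∩ E₁).card = n2 S := rfl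
          have hc3 : (S ∩ E₂).card = n3 S := rfl
          have hc4 : (S ∩ Rst).card = n4 S := rfl
          rw [hc1, hc2, hc3, hc4]
          have hs' : s ^ a * (s⁻¹) ^ (n2 S) = s ^ (a - n2 S) := pow_mul_inv_pow s hsne (hn2le S)
          have hM' : (M⁻¹) ^ k * M ^ (n1 S) = (M⁻¹) ^ (k - n1 S) := by
            have h' := pow_mul_inv_pow (M⁻¹) (inv_ne_zero hMne) (hn1le S)
            rwa [inv_inv] at h'
          rw [← hs', pow_add, ← hM']
          ring
        rw [Finset.sum_congr rfl (fun S _ => hterm S)]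
        rw [← Finset.sum_filter_add_sum_filter_not Finset.univ (fun S => x ∈ S)]
        have h1 : ∑ S ∈ Finset.univ.filter (fun S => x ∈ S),
            c S * u ^ (S ∩ {x}).card * s ^ (a - n2 S) * t ^ (n3 S)
              * (M⁻¹) ^ ((k - n1 S) + n4 S) = u * β m := by
          rw [hβ, Finset.mul_sum]
          apply Finset.sum_congr rfl
          intro S hS
          rw [Finset.mem_filter] at hS
          rw [hxin S hS.2, pow_one, ← hM]
          ring
        have h2 : ∑ S ∈ Finset.univ.filter (fun S => ¬ x ∈ S),
            c S * u ^ (S ∩ {x}).card * s ^ (a - n2 S) * t ^ (n3 S)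
              * (M⁻¹) ^ ((k - n1 S) + n4 S) = α m := by
          rw [hα]
          apply Finset.sum_congr rfl
          intro S hS
          rw [Finset.mem_filter] at hS
          rw [hxout S hS.2, pow_zero, ← hM]
          ring
        rw [h1, h2]
        ring
      rw [← hident]
      apply mul_ne_zero h0
      exact mul_ne_zero (pow_ne_zero _ hsne) (pow_ne_zero _ (inv_ne_zero hMne))
    have hge : ∀ m : ℕ, 0 ≤ (α m * (starRingEnd ℂ) (β m)).re := fun m => lin_root _ _ (hnz m)
    -- limits
    have hcastlim : Tendsto (fun m : ℕ => (((m+1:ℕ):ℂ))⁻¹) atTop (nhds 0) := by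
      have h1 : Tendsto (fun m : ℕ => ((1/(m+1) : ℝ) : ℂ)) atTop (nhds ((0:ℝ):ℂ)) :=
        (Complex.continuous_ofReal.tendsto 0).comp tendsto_one_div_add_atTop_nhds_zero_nat
      have h2 : (fun m : ℕ => (((m+1:ℕ):ℂ))⁻¹) = fun m : ℕ => ((1/(m+1) : ℝ) : ℂ) := by
        funext m
        push_cast
        rw [one_div]
      rw [h2]
      simpa using h1
    have hlimgen : ∀ (Q : Finset (Finset (Fin n))) (hQ : ∀ S ∈ Q, True),
        Tendsto (fun m => ∑ S ∈ Q, c S * s ^ (a - n2 S) * t ^ (n3 S) *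
          ((((m+1 : ℕ) : ℂ))⁻¹) ^ ((k - n1 S) + n4 S)) atTop
          (nhds (∑ S ∈ Q.filter Good, c S * s ^ (a - n2 S) * t ^ (n3 S))) := by
      intro Q _
      have hterm : ∀ S ∈ Q, Tendsto (fun m : ℕ => c S * s ^ (a - n2 S) * t ^ (n3 S) *
          ((((m+1 : ℕ) : ℂ))⁻¹) ^ ((k - n1 S) + n4 S)) atTop
          (nhds (if Good S then c S * s ^ (a - n2 S) * t ^ (n3 S) else 0)) := by
        intro S _
        by_cases hGS : Good S
        · rw [if_pos hGS]
          have h1 : n1 S = k := by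
            have h' : S ∩ K = K := Finset.inter_eq_right.2 hGS.1
            show (S ∩ K).card = k
            rw [h', hk]
          have h2 : n4 S = 0 := by
            show (S ∩ Rst).card = 0
            rw [hGS.2]
            rfl
          have hd : (k - n1 S) + n4 S = 0 := by omega
          simp only [hd, pow_zero, mul_one]
          exact tendsto_const_nhds
        · rw [if_neg hGS]
          have hd : (k - n1 S) + n4 S ≠ 0 := by
            rcases not_and_or.1 hGS with h'|h'
            · have hne : S ∩ K ≠ K := by
                intro hEq
                exact h' (fun i hi => by
                  have h'' : i ∈ S ∩ K := by rw [hEq]; exact hi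
                  exact (Finset.mem_inter.1 h'').1)
              have hss : S ∩ K ⊂ K := (Finset.inter_subset_right).ssubset_of_ne hne
              have hlt := Finset.card_lt_card hss
              have hc1 : (S ∩ K).card = n1 S := rfl
              omega
            · have hpos : 0 < (S ∩ Rst).card :=
                Finset.card_pos.2 (Finset.nonempty_iff_ne_empty.2 h')
              have hc4 : (S ∩ Rst).card = n4 S := rfl
              omega
          have h2 := hcastlim.pow ((k - n1 S) + n4 S)
          rw [zero_pow hd] at h2
          have h3 := Filter.Tendsto.mul
            (tendsto_const_nhds (x := c S * s ^ (a - n2 S) * t ^ (n3 S))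
              (f := (atTop : Filter ℕ))) h2
          simpa using h3
      have h4 := tendsto_finset_sum Q hterm
      rw [← Finset.sum_filter] at h4
      exact h4
    have hαlim : Tendsto α atTop (nhds (∑ S ∈ G1, c S * s ^ (a - n2 S) * t ^ (n3 S))) := by
      rw [hG1]
      exact hlimgen Q1 (fun _ _ => trivial)
    have hβlim : Tendsto β atTop (nhds (∑ S ∈ G0, c S * s ^ (a - n2 S) * t ^ (n3 S))) := by
      rw [hG0]
      exact hlimgen Q0 (fun _ _ => trivial)
    have hprodlim : Tendsto (fun m => (α m * (starRingEnd ℂ) (β m)).re) atTop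
        (nhds (((∑ S ∈ G1, c S * s ^ (a - n2 S) * t ^ (n3 S)) *
          (starRingEnd ℂ) (∑ S ∈ G0, c S * s ^ (a - n2 S) * t ^ (n3 S))).re)) := by
      apply (Complex.continuous_re.tendsto _).comp
      exact hαlim.mul (((Complex.continuous_conj).tendsto _).comp hβlim)
    have hfin := ge_of_tendsto' hprodlim hge
    rw [hgridsum G1 p s t (fun i j => rfl), hgridsum G0 q s t (fun i j => rfl)]
    exact hfin
  -- conclude via lemB
  have hpz : ∀ i j, i + j ≤ 1 → p i j = 0 := by
    intro i j hij
    have hcase : (i = 0 ∧ j = 0) ∨ (i = 1 ∧ j = 0) ∨ (i = 0 ∧ j = 1) := by omega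
    rcases hcase with ⟨rfl, rfl⟩|⟨rfl, rfl⟩|⟨rfl, rfl⟩
    · exact hp00
    · exact hp10
    · exact hp01
  have hfinal := lemB a b p q (by rw [hq00]; exact hA) hpz hmain
  rw [hpab] at hfinal
  exact hB hfinal

end Core1

lemma core {n : ℕ} (c : Finset (Fin n) → ℂ)
    (hφ : ∀ z : Fin n → ℂ, (∀ i, 0 < (z i).re) →
      (∑ S : Finset (Fin n), c S * ∏ i ∈ S, z i) ≠ 0)
    (A B : Finset (Fin n)) (hA : c A ≠ 0) (hB : c B ≠ 0)
    (x : Fin n) (hx : x ∈ symmDiff A B) :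
    ∃ y ∈ symmDiff A B, c (symmDiff A {x, y}) ≠ 0 := by
  classical
  by_contra hcon
  push_neg at hcon
  rw [Finset.mem_symmDiff] at hx
  rcases hx with ⟨hxA, hxB⟩|⟨hxB, hxA⟩
  · exact core1 c hφ A B x hxA hxB hA hB hcon
  · -- x ∈ B \ A : pass to complements
    set d : Finset (Fin n) → ℂ := fun S => c Sᶜ with hd
    have hφ' : ∀ z : Fin n → ℂ, (∀ i, 0 < (z i).re) →
        (∑ S : Finset (Fin n), d S * ∏ i ∈ S, z i) ≠ 0 := by
      intro z hzre
      have hzne : ∀ i, z i ≠ 0 := by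
        intro i h
        have := hzre i
        rw [h] at this
        simp at this
      have hinv : ∀ i, 0 < ((z i)⁻¹).re := by
        intro i
        rw [Complex.inv_re]
        exact div_pos (hzre i) (Complex.normSq_pos.2 (hzne i))
      have h0 := hφ (fun i => (z i)⁻¹) hinv
      have hterm : ∀ T : Finset (Fin n), (∏ i, z i) * (c T * ∏ i ∈ T, (z i)⁻¹)
          = c T * ∏ i ∈ Tᶜ, z i := by
        intro T
        have hTne : (∏ i ∈ T, z i) ≠ 0 := Finset.prod_ne_zero_iff.2 (fun i _ => hzne i)
        have hsplit : (∏ i ∈ Tᶜ, z i) * (∏ i ∈ T, z i) = ∏ i, z i := by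
          rw [Finset.compl_eq_univ_sdiff]
          exact Finset.prod_sdiff (Finset.subset_univ T)
        have hip : ∏ i ∈ T, (z i)⁻¹ = (∏ i ∈ T, z i)⁻¹ := by
          rw [Finset.prod_inv_distrib]
        rw [hip, ← hsplit]
        field_simp
      have hre : ∑ S : Finset (Fin n), d S * ∏ i ∈ S, z i
          = (∏ i, z i) * ∑ T : Finset (Fin n), c T * ∏ i ∈ T, (z i)⁻¹ := by
        rw [Finset.mul_sum]
        have hbij := Fintype.sum_bijective (fun T : Finset (Fin n) => Tᶜ)
          (compl_involutive.bijective)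
          (fun T : Finset (Fin n) => (∏ i, z i) * (c T * ∏ i ∈ T, (z i)⁻¹))
          (fun S : Finset (Fin n) => d S * ∏ i ∈ S, z i) ?_
        · exact hbij.symm
        · intro T
          show (∏ i, z i) * (c T * ∏ i ∈ T, (z i)⁻¹) = d Tᶜ * ∏ i ∈ Tᶜ, z i
          rw [hterm T]
          show c T * ∏ i ∈ Tᶜ, z i = c Tᶜᶜ * ∏ i ∈ Tᶜ, z i
          rw [compl_compl]
      rw [hre]
      exact mul_ne_zero (Finset.prod_ne_zero_iff.2 (fun i _ => hzne i)) h0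
    have hsdc : symmDiff Aᶜ Bᶜ = symmDiff A B := by
      ext i
      simp only [Finset.mem_symmDiff, Finset.mem_compl]
      tauto
    have hsd2 : ∀ y, symmDiff Aᶜ ({x, y} : Finset (Fin n)) = (symmDiff A {x, y})ᶜ := by
      intro y
      ext i
      simp only [Finset.mem_symmDiff, Finset.mem_compl, Finset.mem_insert, Finset.mem_singleton]
      tauto
    apply core1 d hφ' Aᶜ Bᶜ x (Finset.mem_compl.2 hxA)
      (fun h => (Finset.mem_compl.1 h) hxB)
      (by show c Aᶜᶜ ≠ 0; rwa [compl_compl]) (by show c Bᶜᶜ ≠ 0; rwa [compl_compl])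
    intro y hy
    rw [hsd2 y]
    show c (symmDiff A {x, y})ᶜᶜ = 0
    rw [compl_compl]
    apply hcon
    rwa [hsdc] at hy

open MvPolynomial

/-- The support of a multi-affine polynomial with the half-plane property
satisfies the symmetric exchange axiom, i.e. it is a delta-matroid. -/
theorem stmt_2 {n : ℕ} (f : MvPolynomial (Fin n) ℂ)
    (hma : ∀ m ∈ f.support, ∀ i, m i ≤ 1)
    (hpp : ∃ w : ℂ, w ≠ 0 ∧ ∀ z : Fin n → ℂ, (∀ i, 0 < (w * z i).re) → eval z f ≠ 0)
    (F : Set (Finset (Fin n)))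
    (hF : F = {S | coeff (∑ i ∈ S, Finsupp.single i 1) f ≠ 0}) :
    ∀ A ∈ F, ∀ B ∈ F, ∀ x ∈ symmDiff A B, ∃ y ∈ symmDiff A B, symmDiff A {x, y} ∈ F := by
  classical
  obtain ⟨w, hw, hpp'⟩ := hpp
  subst hF
  intro A hA B hB x hx
  set ind : Finset (Fin n) → (Fin n →₀ ℕ) := fun S => ∑ i ∈ S, Finsupp.single i 1 with hind
  have hind_apply : ∀ (S : Finset (Fin n)) (i : Fin n), ind S i = if i ∈ S then 1 else 0 := by
    intro S i
    rw [hind]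
    show (∑ j ∈ S, Finsupp.single j 1) i = _
    rw [Finsupp.finset_sum_apply]
    simp [Finsupp.single_apply]
  have hind_inj : Function.Injective ind := by
    intro S T hST
    ext i
    have h1 := hind_apply S i
    have h2 := hind_apply T i
    rw [hST] at h1
    rw [h2] at h1
    by_cases hS : i ∈ S <;> by_cases hT : i ∈ T <;> simp_all
  have hind_eq : ∀ m : Fin n →₀ ℕ, (∀ i, m i ≤ 1) → ind m.support = m := by
    intro m hm
    ext i
    rw [hind_apply]
    by_cases h : i ∈ m.support
    · rw [if_pos h]
      have := Finsupp.mem_support_iff.1 h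
      have := hm i
      omega
    · rw [if_neg h]
      have := Finsupp.notMem_support_iff.1 h
      omega
  set c₀ : Finset (Fin n) → ℂ := fun S => coeff (ind S) f with hc₀
  have hfeq : f = ∑ S : Finset (Fin n), monomial (ind S) (c₀ S) := by
    apply MvPolynomial.ext
    intro d
    rw [MvPolynomial.coeff_sum]
    by_cases hd : d ∈ f.support
    · have hdm : ind d.support = d := hind_eq d (hma d hd)
      rw [Finset.sum_eq_single d.support]
      · rw [MvPolynomial.coeff_monomial, if_pos hdm]
        show coeff d f = coeff (ind d.support) f
        rw [hdm]
      · intro S _ hSne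
        rw [MvPolynomial.coeff_monomial, if_neg]
        intro hEq
        exact hSne (hind_inj (hEq.trans hdm.symm))
      · intro habs
        exact absurd (Finset.mem_univ _) habs
    · rw [MvPolynomial.notMem_support_iff.1 hd]
      symm
      apply Finset.sum_eq_zero
      intro S _
      rw [MvPolynomial.coeff_monomial]
      split_ifs with hEq
      · show coeff (ind S) f = 0
        rw [hEq]
        exact MvPolynomial.notMem_support_iff.1 hd
      · rfl
  have heval : ∀ z : Fin n → ℂ, eval z f = ∑ S : Finset (Fin n), c₀ S * ∏ i ∈ S, z i := by
    intro z
    conv_lhs => rw [hfeq]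
    rw [map_sum]
    apply Finset.sum_congr rfl
    intro S _
    rw [MvPolynomial.eval_monomial]
    congr 1
    rw [Finsupp.prod]
    have hsupp : (ind S).support = S := by
      ext i
      rw [Finsupp.mem_support_iff, hind_apply]
      by_cases h : i ∈ S <;> simp [h]
    rw [hsupp]
    apply Finset.prod_congr rfl
    intro i hi
    rw [hind_apply, if_pos hi, pow_one]
  set c : Finset (Fin n) → ℂ := fun S => c₀ S * (w⁻¹) ^ S.card with hc
  have hcne : ∀ S, c S ≠ 0 ↔ c₀ S ≠ 0 := by
    intro S
    rw [hc]
    show c₀ S * (w⁻¹) ^ S.card ≠ 0 ↔ _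
    constructor
    · intro h h0
      exact h (by rw [h0, zero_mul])
    · intro h
      exact mul_ne_zero h (pow_ne_zero _ (inv_ne_zero hw))
  have hφ : ∀ z : Fin n → ℂ, (∀ i, 0 < (z i).re) →
      (∑ S : Finset (Fin n), c S * ∏ i ∈ S, z i) ≠ 0 := by
    intro z hz
    have heq : ∑ S : Finset (Fin n), c S * ∏ i ∈ S, z i = eval (fun i => w⁻¹ * z i) f := by
      rw [heval]
      apply Finset.sum_congr rfl
      intro S _
      show c₀ S * (w⁻¹) ^ S.card * ∏ i ∈ S, z i = c₀ S * ∏ i ∈ S, (w⁻¹ * z i)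
      rw [Finset.prod_mul_distrib, Finset.prod_const]
      ring
    rw [heq]
    apply hpp'
    intro i
    have hwz : w * (w⁻¹ * z i) = z i := by
      field_simp
    rw [hwz]
    exact hz i
  have hA' : c A ≠ 0 := (hcne A).2 hA
  have hB' : c B ≠ 0 := (hcne B).2 hB
  obtain ⟨y, hy, hyne⟩ := core c hφ A B hA' hB' x hx
  exact ⟨y, hy, (hcne _).1 hyne⟩
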